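/- Suppose A is a closed subalgebra of C(X) (X compact Hausdorff) separating points and containing constants, h ∈ A, and b is a real number not in the image of Re ∘ h. Then the characteristic function of the clopen set {x ∈ X : Re(h(x)) < b} belongs to A. -/

import Mathlib

set_option maxHeartbeats 1000000
set_option synthInstance.maxHeartbeats 1000000

open Complex Metric Set Real


private lemma stmt3_endgame (c : ℂ) (r : ℝ) (hr0 : 0 < r) (ζ : ℂ) (b : ℝ)
    (hball : ζ.re < b → ζ ∈ Metric.ball c r)
    (hfar : ¬ζ.re < b → r < dist ζ c) :
    (2 * (Real.pi : ℂ) * Complex.I)⁻¹ • (∮ w in C(c, r), (w - ζ)⁻¹)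
      = if ζ.re < b then 1 else 0 := by
  by_cases hlt : ζ.re < b
  · rw [if_pos hlt, circleIntegral.integral_sub_inv_of_mem_ball (hball hlt), smul_eq_mul,
      inv_mul_cancel₀ Complex.two_pi_I_ne_zero]
  · rw [if_neg hlt]
    have hfar' := hfar hlt
    have hzero : (∮ w in C(c, r), (w - ζ)⁻¹) = 0 := by
      apply circleIntegral_eq_zero_of_differentiable_on_off_countable hr0.le
        Set.countable_empty
      · intro z hz
        rw [Metric.mem_closedBall] at hz
        have hzne : z - ζ ≠ 0 := by
          rw [sub_ne_zero]
          intro hzeq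
          rw [hzeq] at hz
          linarith
        exact (ContinuousAt.continuousWithinAt
          (((continuous_id.sub continuous_const).continuousAt).inv₀ hzne))
      · intro z hz
        have hz' : dist z c < r := Metric.mem_ball.mp hz.1
        have hzne : z - ζ ≠ 0 := by
          rw [sub_ne_zero]
          intro hzeq
          rw [hzeq] at hz'
          linarith
        exact (differentiableAt_id.sub_const _).inv hzne
    rw [hzero, smul_zero]

/-- If `A ≤ C(X, ℂ)` is a closed subalgebra separating points (and containing constants),
`h ∈ A`, and `b ∈ ℝ` is not in the image of `Re ∘ h`, then the characteristic function of
the clopen set `{x : Re (h x) < b}` belongs to `A`. -/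
theorem stmt3 {X : Type*} [TopologicalSpace X] [CompactSpace X] [T2Space X]
    (A : Subalgebra ℂ C(X, ℂ)) (hA : A.SeparatesPoints)
    (hAcl : IsClosed (A : Set C(X, ℂ)))
    (h : C(X, ℂ)) (hh : h ∈ A) (b : ℝ) (hb : ∀ x : X, (h x).re ≠ b) :
    ∃ g ∈ A, ∀ x : X, g x = if (h x).re < b then 1 else 0 := by
  rcases isEmpty_or_nonempty X with hX | hX
  · exact ⟨1, A.one_mem, fun x => (IsEmpty.false x).elim⟩
  haveI : CompleteSpace ↥A := hAcl.completeSpace_coe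
  haveI : NormOneClass ↥A := ⟨by
    show ‖((1 : ↥A) : C(X, ℂ))‖ = 1
    rw [OneMemClass.coe_one]; exact norm_one⟩
  set h₀ : ↥A := ⟨h, hh⟩ with hh₀def
  -- every value of h is in the spectrum of h₀
  have hxσ : ∀ x : X, h x ∈ spectrum ℂ h₀ := by
    intro x
    have := AlgHom.apply_mem_spectrum
      ((ContinuousMap.evalAlgHom (S := ℂ) (R := ℂ) x).comp A.val) h₀
    simpa using this
  -- nonvanishing on the line
  have hne : ∀ (t : ℝ) (x : X), (b : ℂ) + t * I - h x ≠ 0 := by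
    intro t x hzero
    apply hb x
    have := congrArg Complex.re hzero
    simp at this
    linarith
  -- uncurried resolvent on the line
  have hGcont : Continuous fun p : ℝ × X => ((b : ℂ) + p.1 * I - h p.2)⁻¹ := by
    refine Continuous.inv₀ ?_ fun p => hne p.1 p.2
    exact (continuous_const.add ((Complex.continuous_ofReal.comp continuous_fst).mul
      continuous_const)).sub (h.continuous.comp continuous_snd)
  set G : C(ℝ × X, ℂ) := ⟨_, hGcont⟩ with hGdef
  have hFt : ∀ (t : ℝ) (x : X), (G.curry t) x = ((b : ℂ) + t * I - h x)⁻¹ := fun _ _ => rfl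
  -- membership criterion on the line
  have key : ∀ t : ℝ, ((b : ℂ) + t * I) ∈ resolventSet ℂ h₀ ↔ (G.curry t : C(X, ℂ)) ∈ A := by
    intro t
    constructor
    · intro hres
      have hu : IsUnit (algebraMap ℂ ↥A ((b : ℂ) + t * I) - h₀) := hres
      have h3 : ((hu.unit : ↥A) : C(X, ℂ)) = algebraMap ℂ C(X, ℂ) ((b : ℂ) + t * I) - h := by
        rw [hu.unit_spec]
        show (A.val (algebraMap ℂ ↥A ((b : ℂ) + t * I) - h₀)) = _
        rw [map_sub, AlgHom.commutes]; rfl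
      have hmem : ((↑hu.unit⁻¹ : ↥A) : C(X, ℂ)) ∈ A := (↑hu.unit⁻¹ : ↥A).2
      have heq : (G.curry t : C(X, ℂ)) = ((↑hu.unit⁻¹ : ↥A) : C(X, ℂ)) := by
        ext x
        have h1 : ((hu.unit : ↥A) : C(X, ℂ)) * ((↑hu.unit⁻¹ : ↥A) : C(X, ℂ)) = 1 := by
          rw [← MulMemClass.coe_mul, hu.unit.mul_inv, OneMemClass.coe_one]
        have h2 := ContinuousMap.congr_fun h1 x
        rw [ContinuousMap.mul_apply, ContinuousMap.one_apply, h3] at h2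
        have h4 : ((b : ℂ) + t * I - h x) * ((↑hu.unit⁻¹ : ↥A) : C(X, ℂ)) x = 1 := by
          simpa using h2
        rw [hFt]
        exact inv_eq_of_mul_eq_one_right h4
      rw [heq]; exact hmem
    · intro hmem
      show IsUnit (algebraMap ℂ ↥A ((b : ℂ) + t * I) - h₀)
      have hprod : (algebraMap ℂ ↥A ((b : ℂ) + t * I) - h₀) * ⟨_, hmem⟩ = 1 := by
        apply Subtype.ext
        rw [MulMemClass.coe_mul]
        have hcoe : ((algebraMap ℂ ↥A ((b : ℂ) + t * I) - h₀ : ↥A) : C(X, ℂ))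
            = algebraMap ℂ C(X, ℂ) ((b : ℂ) + t * I) - h := by
          show (A.val (algebraMap ℂ ↥A ((b : ℂ) + t * I) - h₀)) = _
          rw [map_sub, AlgHom.commutes]; rfl
        rw [hcoe]
        ext x
        simp [hFt, mul_inv_cancel₀ (hne t x)]
      exact IsUnit.of_mul_eq_one _ hprod
  -- the whole line is in the resolvent set
  have hlineres : ∀ t : ℝ, ((b : ℂ) + t * I) ∈ resolventSet ℂ h₀ := by
    have hS : {t : ℝ | ((b : ℂ) + t * I) ∈ resolventSet ℂ h₀} = Set.univ := by
      apply IsClopen.eq_univ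
      · constructor
        · have heqS : {t : ℝ | ((b : ℂ) + t * I) ∈ resolventSet ℂ h₀}
              = (fun t => (G.curry t : C(X, ℂ))) ⁻¹' (A : Set C(X, ℂ)) := by
            ext t; exact key t
          rw [heqS]
          exact hAcl.preimage G.curry.continuous
        · exact (spectrum.isOpen_resolventSet h₀).preimage
            (continuous_const.add (Complex.continuous_ofReal.mul continuous_const))
      · refine ⟨‖h₀‖ + |b| + 1, spectrum.mem_resolventSet_of_norm_lt ?_⟩
        have him : |((b : ℂ) + (‖h₀‖ + |b| + 1 : ℝ) * I).im|
            ≤ ‖(b : ℂ) + (‖h₀‖ + |b| + 1 : ℝ) * I‖ := by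
          exact Complex.abs_im_le_norm _
        simp only [Complex.add_im, Complex.ofReal_im, Complex.mul_im, Complex.ofReal_re,
          Complex.I_im, Complex.I_re, mul_one, mul_zero, add_zero, zero_add] at him
        have habs1 : |‖h₀‖ + |b| + 1| = ‖h₀‖ + |b| + 1 := abs_of_nonneg (by positivity)
        rw [habs1] at him
        calc ‖h₀‖ < ‖h₀‖ + |b| + 1 := by linarith [abs_nonneg b]
          _ ≤ _ := him
    intro t
    have : t ∈ {t : ℝ | ((b : ℂ) + t * I) ∈ resolventSet ℂ h₀} := hS ▸ Set.mem_univ t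
    exact this
  -- spectrum avoids the line
  have hspec_re : ∀ z ∈ spectrum ℂ h₀, z.re ≠ b := by
    intro z hz hzb
    have hzeq : z = (b : ℂ) + z.im * I := by
      apply Complex.ext <;> simp [hzb]
    exact hz (hzeq ▸ hlineres z.im)
  -- uniform gap δ
  obtain ⟨δ, hδ0, hδ⟩ : ∃ δ > 0, ∀ z ∈ spectrum ℂ h₀, δ ≤ |z.re - b| := by
    rcases Set.eq_empty_or_nonempty (spectrum ℂ h₀) with hσ | hσ
    · exact ⟨1, one_pos, by simp [hσ]⟩
    · obtain ⟨z₀, hz₀, hmin⟩ := (spectrum.isCompact h₀).exists_isMinOn hσ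
        ((continuous_abs.comp ((Complex.continuous_re).sub continuous_const)).continuousOn)
      exact ⟨|z₀.re - b|, abs_pos.2 (sub_ne_zero.2 (hspec_re z₀ hz₀)), fun z hz => hmin hz⟩
  set M := ‖h‖ with hMdef
  have hM0 : 0 ≤ M := norm_nonneg h
  have hnorm₀ : ‖h₀‖ = M := rfl
  have hbd : ∀ z ∈ spectrum ℂ h₀, |z.re| ≤ M ∧ |z.im| ≤ M := by
    intro z hz
    have h1 : ‖z‖ ≤ M := hnorm₀ ▸ spectrum.norm_le_norm_of_mem hz
    exact ⟨le_trans (Complex.abs_re_le_norm z) h1, le_trans (Complex.abs_im_le_norm z) h1⟩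
  -- geometry
  set t : ℝ := M ^ 2 / δ + δ + |b| + M + 1 with htdef
  set c : ℂ := ((b - t : ℝ) : ℂ) with hcdef
  set r : ℝ := t - δ / 2 with hrdef
  have htδ : M ^ 2 / δ * δ = M ^ 2 := div_mul_cancel₀ _ hδ0.ne'
  have ht1 : M + |b| + δ + 1 ≤ t := by
    have : 0 ≤ M ^ 2 / δ := by positivity
    simp only [htdef]; linarith
  have hr0 : 0 < r := by
    simp only [hrdef]
    nlinarith [abs_nonneg b, ht1]
  have hin : ∀ z : ℂ, |z.re| ≤ M → |z.im| ≤ M → z.re ≤ b - δ → z ∈ ball c r := by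
    intro z h1 h2 h3
    rw [mem_ball, Complex.dist_eq]
    have hsq : ‖z - c‖ ^ 2 < r ^ 2 := by
      rw [Complex.sq_norm, Complex.normSq_apply]
      simp only [hcdef, Complex.sub_re, Complex.sub_im, Complex.ofReal_re, Complex.ofReal_im,
        sub_zero]
      have hre1 : z.re - (b - t) ≤ t - δ := by linarith
      have hre2 : 0 ≤ z.re - (b - t) := by
        have := abs_le.mp h1
        have := le_abs_self b
        linarith [ht1]
      have h5 : (z.re - (b - t)) ^ 2 ≤ (t - δ) ^ 2 := by nlinarith
      have h6 : z.im ^ 2 ≤ M ^ 2 := by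
        rcases abs_le.mp h2 with ⟨ha, hb'⟩; nlinarith
      have h7 : (t - δ) ^ 2 + M ^ 2 < r ^ 2 := by
        simp only [hrdef]
        nlinarith [htδ, abs_nonneg b, hδ0, hM0]
      linarith
    have habs : 0 ≤ ‖z - c‖ := norm_nonneg _
    nlinarith [hsq, habs, hr0]
  have hout : ∀ z : ℂ, b + δ ≤ z.re → r < dist z c := by
    intro z hz
    have h1 : (z - c).re ≤ ‖z - c‖ := Complex.re_le_norm _
    have h2 : (z - c).re = z.re - (b - t) := by
      simp [hcdef]
    rw [h2] at h1
    rw [Complex.dist_eq]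
    calc r = t - δ / 2 := hrdef
      _ < z.re - (b - t) := by linarith
      _ ≤ _ := h1
  have hsphere_res : ∀ w ∈ sphere c r, w ∈ resolventSet ℂ h₀ := by
    intro w hw
    by_contra hres
    have hwσ : w ∈ spectrum ℂ h₀ := hres
    have hgap := hδ w hwσ
    have hdist : dist w c = r := mem_sphere.mp hw
    rcases abs_cases (w.re - b) with ⟨he, _⟩ | ⟨he, _⟩
    · have : b + δ ≤ w.re := by rw [he] at hgap; linarith
      have := hout w this
      linarith
    · have hre : w.re ≤ b - δ := by rw [he] at hgap; linarith
      obtain ⟨hre', him'⟩ := hbd w hwσ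
      have := hin w hre' him' hre
      rw [mem_ball] at this
      linarith
  have hballx : ∀ x : X, (h x).re < b → h x ∈ ball c r := by
    intro x hlt
    have hgap := hδ (h x) (hxσ x)
    have hre : (h x).re ≤ b - δ := by
      rcases abs_cases ((h x).re - b) with ⟨he, _⟩ | ⟨he, _⟩
      · linarith
      · rw [he] at hgap; linarith
    exact hin (h x) (hbd (h x) (hxσ x)).1 (hbd (h x) (hxσ x)).2 hre
  have hfarx : ∀ x : X, ¬(h x).re < b → r < dist (h x) c := by
    intro x hlt
    have hgap := hδ (h x) (hxσ x)
    have hre : b + δ ≤ (h x).re := by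
      rcases abs_cases ((h x).re - b) with ⟨he, _⟩ | ⟨he, _⟩
      · rw [he] at hgap; linarith
      · push_neg at hlt
        rcases lt_or_eq_of_le hlt with h' | h'
        · linarith
        · exact absurd h'.symm (hb x)
    exact hout (h x) hre
  -- resolvent function with values in A
  set res : ℂ → ↥A := fun w => Ring.inverse (algebraMap ℂ ↥A w - h₀) with hresdef
  have hres_cont : ContinuousOn res (sphere c r) := by
    intro w hw
    have hu : IsUnit (algebraMap ℂ ↥A w - h₀) := hsphere_res w hw
    have hc1 : ContinuousAt (fun w : ℂ => algebraMap ℂ ↥A w - h₀) w :=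
      ((continuous_algebraMap ℂ ↥A).sub continuous_const).continuousAt
    have hc2 : ContinuousAt Ring.inverse (algebraMap ℂ ↥A w - h₀) := by
      rw [← hu.unit_spec]
      exact NormedRing.inverse_continuousAt hu.unit
    have hcomp : ContinuousAt (fun w : ℂ => Ring.inverse (algebraMap ℂ ↥A w - h₀)) w :=
      ContinuousAt.comp (g := Ring.inverse) hc2 hc1
    exact hcomp.continuousWithinAt
  have hCI : CircleIntegrable res c r := hres_cont.circleIntegrable hr0.le
  set g₀ : ↥A := (2 * (π : ℂ) * I)⁻¹ • ∮ w in C(c, r), res w with hg₀def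
  refine ⟨(g₀ : C(X, ℂ)), g₀.2, ?_⟩
  intro x
  have hLc : Continuous fun a : ↥A => ((a : C(X, ℂ)) x) :=
    (continuous_eval_const x).comp continuous_subtype_val
  set L : ↥A →L[ℂ] ℂ :=
    { toFun := fun a : ↥A => ((a : C(X, ℂ)) x)
      map_add' := fun u v => rfl
      map_smul' := fun m a => rfl
      cont := hLc } with hLdef
  have hL : ∀ a : ↥A, L a = (a : C(X, ℂ)) x := fun a => rfl
  have hres_eval : ∀ w ∈ sphere c r, L (res w) = (w - h x)⁻¹ := by
    intro w hw
    have hu : IsUnit (algebraMap ℂ ↥A w - h₀) := hsphere_res w hw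
    have h1 : res w = ↑hu.unit⁻¹ := by
      show Ring.inverse (algebraMap ℂ ↥A w - h₀) = ↑hu.unit⁻¹
      conv_lhs => rw [← hu.unit_spec]
      exact Ring.inverse_unit hu.unit
    have h3 : ((hu.unit : ↥A) : C(X, ℂ)) = algebraMap ℂ C(X, ℂ) w - h := by
      rw [hu.unit_spec]
      show (A.val (algebraMap ℂ ↥A w - h₀)) = _
      rw [map_sub, AlgHom.commutes]; rfl
    have h2 : ((hu.unit : ↥A) : C(X, ℂ)) x * ((↑hu.unit⁻¹ : ↥A) : C(X, ℂ)) x = 1 := by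
      rw [← ContinuousMap.mul_apply, ← MulMemClass.coe_mul, hu.unit.mul_inv,
        OneMemClass.coe_one, ContinuousMap.one_apply]
    rw [h3] at h2
    have h4 : (w - h x) * ((↑hu.unit⁻¹ : ↥A) : C(X, ℂ)) x = 1 := by
      simpa using h2
    rw [hL, h1]
    exact (inv_eq_of_mul_eq_one_right h4).symm
  have key2 : L g₀ = (2 * (π : ℂ) * I)⁻¹ • ∮ w in C(c, r), (w - h x)⁻¹ := by
    rw [hg₀def, map_smul]
    congr 1
    calc L (∮ w in C(c, r), res w)
        = ∫ θ in (0:ℝ)..2 * π, L (deriv (circleMap c r) θ • res (circleMap c r θ)) :=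
          (L.intervalIntegral_comp_comm hCI.out).symm
      _ = ∫ θ in (0:ℝ)..2 * π, deriv (circleMap c r) θ • (circleMap c r θ - h x)⁻¹ := by
          refine intervalIntegral.integral_congr fun θ _ => ?_
          rw [map_smul, hres_eval _ (circleMap_mem_sphere c hr0.le θ)]
      _ = ∮ w in C(c, r), (w - h x)⁻¹ := rfl
  have hgx : (g₀ : C(X, ℂ)) x = L g₀ := rfl
  rw [hgx, key2]
  exact stmt3_endgame c r hr0 (h x) b (hballx x) (fun hn => hfarx x hn)
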